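/- arXiv:1108.3357 — 2 statements merged into one kernel-verified Lean document; each statement's English description precedes it below -/
import Mathlib

section
/- Fix 0 < q < 1 and integers n ≥ 1, m ≥ 2, N = n + m. Define the Jackson-type integral ∫₁^∞ f(x) d_{q^{-2}}x = (q^{-2} − 1) Σ_{k=0}^∞ f(q^{-2k}) q^{-2k} and the weight ρ(x) = const₂ · x^{m−1}(q^{-2}x − 1)(q^{-4}x − 1)⋯(q^{-2(n−1)}x − 1) with const₂ = (1/(q^{-2}−1)) ∏_{j=1}^{n−1} 1/(q^{-2j}−1). Then for every finitely supported function f on q^{-2ℤ₊}, the double sum const₁ · Σ_{i₁,…,i_n ∈ −ℤ₊, i_{n+1},…,i_{N−1} ∈ ℕ} f(q^{2(i₁+⋯+i_n)}) q^{2(N−1)i₁ + 2(N−2)i₂ + ⋯ + 2i_{N−1}}, with const₁ = ∏_{j=1}^{m−1}(q^{-2j} − 1), equals ∫₁^∞ f(x) ρ(x) d_{q^{-2}}x. -/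
set_option maxHeartbeats 1600000

open Finset

section AuxGeom

lemma hasSum_pi_geometric : ∀ {d : ℕ} (h : Fin d → ℝ), (∀ r, 0 ≤ h r) → (∀ r, h r < 1) →
    HasSum (fun b : Fin d → ℕ => ∏ r, h r ^ b r) (∏ r, (1 - h r)⁻¹) := by
  intro d
  induction d with
  | zero =>
    intro h _ _
    have h1 : HasSum (fun b : Fin 0 → ℕ => ∏ r, h r ^ b r)
        (∏ r, h r ^ (default : Fin 0 → ℕ) r) :=
      hasSum_single default (fun b hb => (hb (Subsingleton.elim b default)).elim)
    simpa using h1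
  | succ d ih =>
    intro h h0 h1
    have hs : HasSum (fun x : ℕ => h 0 ^ x) (1 - h 0)⁻¹ :=
      hasSum_geometric_of_lt_one (h0 0) (h1 0)
    have ht : HasSum (fun b : Fin d → ℕ => ∏ r, h r.succ ^ b r)
        (∏ r : Fin d, (1 - h r.succ)⁻¹) := ih (fun r => h r.succ) (fun r => h0 _) (fun r => h1 _)
    have hu' : ∀ x : ℕ, 0 ≤ h 0 ^ x := fun x => pow_nonneg (h0 0) _
    have hv' : ∀ b : Fin d → ℕ, 0 ≤ ∏ r, h r.succ ^ b r :=
      fun b => Finset.prod_nonneg fun r _ => pow_nonneg (h0 _) _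
    have hsummul := Summable.mul_of_nonneg hs.summable ht.summable hu' hv'
    have hmul := HasSum.mul hs ht hsummul
    rw [← (Fin.consEquiv (fun _ : Fin (d + 1) => ℕ)).hasSum_iff]
    have hfun : ((fun b : Fin (d + 1) → ℕ => ∏ r, h r ^ b r) ∘
        (Fin.consEquiv fun _ : Fin (d + 1) => ℕ)) =
        fun z : ℕ × (Fin d → ℕ) => h 0 ^ z.1 * ∏ r, h r.succ ^ z.2 r := by
      funext z
      simp [Fin.consEquiv, Fin.prod_univ_succ]
    rw [hfun, Fin.prod_univ_succ]
    exact hmul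

end AuxGeom

noncomputable def Tsum' (Q : ℝ) (n k : ℕ) : ℝ :=
  ∑ a ∈ Finset.Nat.antidiagonalTuple n k, Q ^ (∑ l : Fin n, (n - 1 - (l : ℕ)) * a l)

lemma Tsum'_zero_right (Q : ℝ) (n : ℕ) : Tsum' Q n 0 = 1 := by
  rw [Tsum', Finset.Nat.antidiagonalTuple_zero_right, Finset.sum_singleton]
  simp

lemma Tsum'_one (Q : ℝ) (k : ℕ) : Tsum' Q 1 k = 1 := by
  rw [Tsum', Finset.Nat.antidiagonalTuple_one, Finset.sum_singleton]
  simp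

lemma Tsum'_succ (Q : ℝ) (n k : ℕ) :
    Tsum' Q (n + 1) k =
      ∑ ij ∈ Finset.HasAntidiagonal.antidiagonal k, Q ^ (n * ij.1) * Tsum' Q n ij.2 := by
  simp_rw [Tsum', Finset.mul_sum]
  rw [Finset.sum_sigma']
  refine Finset.sum_nbij'
    (i := fun a => (⟨(a 0, ∑ l : Fin n, a l.succ), Fin.tail a⟩ :
      Σ _ij : ℕ × ℕ, Fin n → ℕ))
    (j := fun z => Fin.cons z.1.1 z.2) ?_ ?_ ?_ ?_ ?_
  · intro a ha
    rw [Finset.Nat.mem_antidiagonalTuple, Fin.sum_univ_succ] at ha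
    rw [Finset.mem_sigma, Finset.HasAntidiagonal.mem_antidiagonal]
    exact ⟨ha, Finset.Nat.mem_antidiagonalTuple.mpr rfl⟩
  · rintro ⟨⟨i1, i2⟩, b⟩ hz
    rw [Finset.mem_sigma, Finset.HasAntidiagonal.mem_antidiagonal] at hz
    obtain ⟨h1, h2⟩ := hz
    rw [Finset.Nat.mem_antidiagonalTuple] at h2 ⊢
    rw [Fin.sum_univ_succ]
    simp only [Fin.cons_zero, Fin.cons_succ]
    rw [h2]; exact h1
  · intro a _
    exact Fin.cons_self_tail a
  · rintro ⟨⟨i1, i2⟩, b⟩ hz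
    rw [Finset.mem_sigma, Finset.HasAntidiagonal.mem_antidiagonal] at hz
    obtain ⟨h1, h2⟩ := hz
    rw [Finset.Nat.mem_antidiagonalTuple] at h2
    simp [Fin.cons_succ, Fin.tail_cons, h2]
  · intro a ha
    rw [Fin.sum_univ_succ, pow_add]
    have h1 : (n + 1 - 1 - ((0 : Fin (n + 1)) : ℕ)) * a 0 = n * a 0 := by simp
    have h2 : ∑ x : Fin n, (n + 1 - 1 - ((x.succ : Fin (n + 1)) : ℕ)) * a x.succ
        = ∑ x : Fin n, (n - 1 - (x : ℕ)) * Fin.tail a x := by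
      refine Finset.sum_congr rfl fun l _ => ?_
      simp only [Fin.tail, Fin.val_succ]
      congr 1
      omega
    rw [h1, h2]

lemma Tsum'_rec (Q : ℝ) (n k : ℕ) :
    Tsum' Q (n + 1) (k + 1) = Tsum' Q n (k + 1) + Q ^ n * Tsum' Q (n + 1) k := by
  rw [Tsum'_succ, Finset.Nat.antidiagonal_succ, Finset.sum_cons, Finset.sum_map]
  rw [Tsum'_succ, Finset.mul_sum]
  congr 1
  · simp
  · refine Finset.sum_congr rfl fun ij _ => ?_
    simp only [Function.Embedding.coe_prodMap, Function.Embedding.coeFn_mk,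
      Function.Embedding.refl_apply, Prod.map_fst, Prod.map_snd]
    rw [Nat.mul_succ, pow_add]
    ring

lemma Tsum'_eq (Q : ℝ) : ∀ s k : ℕ,
    Tsum' Q (s + 1) k * ∏ j ∈ Finset.range s, (Q ^ (j + 1) - 1)
      = ∏ j ∈ Finset.range s, (Q ^ (j + 1 + k) - 1) := by
  intro s
  induction s with
  | zero => intro k; simp [Tsum'_one]
  | succ s ih =>
    intro k
    induction k with
    | zero => simp [Tsum'_zero_right]
    | succ k ihk =>
      rw [Tsum'_rec, Finset.prod_range_succ, Finset.prod_range_succ]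
      rw [Finset.prod_range_succ] at ihk
      rw [Finset.prod_range_succ' (fun j => Q ^ (j + 1 + k) - 1) s] at ihk
      simp only [show ∀ j : ℕ, j + 1 + 1 + k = j + 1 + (k + 1) from fun j => by omega,
        Nat.zero_add] at ihk
      have e1 := ih (k + 1)
      linear_combination (Q ^ (s + 1) - 1) * e1 + Q ^ (s + 1) * ihk



/-- The weight `ρ(x) = const₂ · x^{m−1}(q^{-2}x − 1)⋯(q^{-2(n−1)}x − 1)` with
`const₂ = (1/(q^{-2}−1)) ∏_{j=1}^{n−1} 1/(q^{-2j}−1)`. -/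
noncomputable def rhoWeight (q : ℝ) (n m : ℕ) (x : ℝ) : ℝ :=
  ((1 / (q ^ (-2 : ℤ) - 1)) * ∏ j ∈ Finset.range (n - 1), (1 / (q ^ (-2 * ((j : ℤ) + 1)) - 1)))
    * x ^ (m - 1) * ∏ j ∈ Finset.range (n - 1), (q ^ (-2 * ((j : ℤ) + 1)) * x - 1)

/-- The radial part of the invariant integral: for every finitely supported function `f`
on the lattice `q^{-2ℤ₊}` (encoded as `f : ℕ → ℝ`, `f k = f(q^{-2k})`, evaluated below at
`q^{2(i₁+⋯+i_n)}` with `i₁,…,i_n ∈ −ℤ₊`),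
`const₁ Σ_{i₁,…,i_n ∈ −ℤ₊; i_{n+1},…,i_{N−1} ∈ ℕ} f(q^{2(i₁+⋯+i_n)})
   q^{2(N−1)i₁+2(N−2)i₂+⋯+2i_{N−1}} = ∫₁^∞ f(x) ρ(x) d_{q^{-2}}x`,
with `const₁ = ∏_{j=1}^{m−1}(q^{-2j}−1)` and the Jackson integral
`∫₁^∞ g d_{q^{-2}}x = (q^{-2}−1) Σ_{k≥0} g(q^{-2k}) q^{-2k}`. -/
theorem stmt3 (q : ℝ) (hq : 0 < q) (hq1 : q < 1) (n m N : ℕ)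
    (hn : 1 ≤ n) (hm : 2 ≤ m) (hN : N = n + m)
    (f : ℕ → ℝ) (hf : (Function.support f).Finite) :
    (∏ j ∈ Finset.range (m - 1), (q ^ (-2 * ((j : ℤ) + 1)) - 1)) *
      ∑' p : (Fin n → ℕ) × (Fin (m - 1) → ℕ),
        f (∑ l, p.1 l) *
          q ^ (-(2 : ℤ) * ∑ l : Fin n, ((N : ℤ) - 1 - (l : ℕ)) * p.1 l) *
          q ^ ((2 : ℤ) * ∑ r : Fin (m - 1), ((m : ℤ) - 1 - (r : ℕ)) * (p.2 r + 1))
    = (q ^ (-2 : ℤ) - 1) *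
        ∑' k : ℕ, f k * rhoWeight q n m (q ^ (-2 * (k : ℤ))) * q ^ (-2 * (k : ℤ)) := by
  
  classical
  obtain ⟨s, rfl⟩ : ∃ s, n = s + 1 := ⟨n - 1, by omega⟩
  obtain ⟨e, rfl⟩ : ∃ e, m = e + 2 := ⟨m - 2, by omega⟩
  subst hN
  have hqne : q ≠ 0 := ne_of_gt hq
  set t : ℝ := q ^ 2 with htdef
  have ht0 : (0 : ℝ) < t := by positivity
  have ht1 : t < 1 := by nlinarith
  set Q : ℝ := q ^ (-2 : ℤ) with hQdef
  have hQt : Q = t⁻¹ := by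
    rw [hQdef, htdef, show (-2 : ℤ) = -((2 : ℕ) : ℤ) by norm_num, zpow_neg, zpow_natCast]
  have hQgt : 1 < Q := by rw [hQt]; exact (one_lt_inv_iff₀).2 ⟨ht0, ht1⟩
  have hQne1 : Q - 1 ≠ 0 := sub_ne_zero.mpr (ne_of_gt hQgt)
  have hzp : ∀ u : ℕ, q ^ ((-2 : ℤ) * (u : ℤ)) = Q ^ u := by
    intro u
    rw [zpow_mul, ← hQdef, zpow_natCast]
  have hzp2 : ∀ u : ℕ, q ^ ((2 : ℤ) * (u : ℤ)) = t ^ u := by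
    intro u
    rw [zpow_mul, show (2 : ℤ) = ((2 : ℕ) : ℤ) by norm_num, zpow_natCast, zpow_natCast, htdef]
  have hq2 : ∀ j : ℕ, q ^ ((-2 : ℤ) * ((j : ℤ) + 1)) = Q ^ (j + 1) := by
    intro j
    rw [show ((j : ℤ) + 1) = ((j + 1 : ℕ) : ℤ) by push_cast; ring, hzp]
  -- the functions F and G
  set F : (Fin (s + 1) → ℕ) → ℝ :=
    fun a => f (∑ l, a l) * Q ^ (∑ l : Fin (s + 1), (s + e + 2 - (l : ℕ)) * a l) with hFdef
  set G : (Fin (e + 2 - 1) → ℕ) → ℝ :=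
    fun b => ∏ r : Fin (e + 2 - 1), (t ^ (e + 1 - (r : ℕ))) ^ (b r + 1) with hGdef
  -- Step 1: rewrite the summand
  have hsummand : ∀ p : (Fin (s + 1) → ℕ) × (Fin (e + 2 - 1) → ℕ),
      f (∑ l, p.1 l) *
        q ^ (-(2 : ℤ) * ∑ l : Fin (s + 1), (((s + 1 + (e + 2) : ℕ) : ℤ) - 1 - (l : ℕ)) * p.1 l) *
        q ^ ((2 : ℤ) * ∑ r : Fin (e + 2 - 1), (((e + 2 : ℕ) : ℤ) - 1 - (r : ℕ)) * (p.2 r + 1))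
      = F p.1 * G p.2 := by
    rintro ⟨a, b⟩
    have hc1 : (∑ l : Fin (s + 1), (((s + 1 + (e + 2) : ℕ) : ℤ) - 1 - ((l : ℕ) : ℤ)) * (a l : ℤ))
        = ((∑ l : Fin (s + 1), (s + e + 2 - (l : ℕ)) * a l : ℕ) : ℤ) := by
      rw [Nat.cast_sum]
      refine Finset.sum_congr rfl fun l _ => ?_
      rw [Nat.cast_mul]
      congr 1
      have hl := l.isLt
      omega
    have hc2 : (∑ r : Fin (e + 2 - 1), (((e + 2 : ℕ) : ℤ) - 1 - ((r : ℕ) : ℤ)) * ((b r : ℤ) + 1))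
        = ((∑ r : Fin (e + 2 - 1), (e + 1 - (r : ℕ)) * (b r + 1) : ℕ) : ℤ) := by
      rw [Nat.cast_sum]
      refine Finset.sum_congr rfl fun r _ => ?_
      rw [Nat.cast_mul]
      have hr := r.isLt
      push_cast
      have h1 : ((e : ℤ) + 2) - 1 - (r : ℕ) = ((e + 1 - (r : ℕ) : ℕ) : ℤ) := by omega
      rw [← h1]
    show f (∑ l, a l) * q ^ (-(2 : ℤ) * _) * q ^ ((2 : ℤ) * _) = _
    rw [hc1, hc2, hzp, hzp2]
    have hGb : t ^ (∑ r : Fin (e + 2 - 1), (e + 1 - (r : ℕ)) * (b r + 1)) = G b := by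
      rw [hGdef]
      simp only []
      rw [← Finset.prod_pow_eq_pow_sum]
      exact Finset.prod_congr rfl fun r _ => (pow_mul t _ _)
    rw [hGb, hFdef]
  -- Step 2: the geometric sum
  have h0 : ∀ r : Fin (e + 2 - 1), 0 ≤ t ^ (e + 1 - (r : ℕ)) := fun r => (pow_pos ht0 _).le
  have h1 : ∀ r : Fin (e + 2 - 1), t ^ (e + 1 - (r : ℕ)) < 1 := fun r => by
    refine pow_lt_one₀ ht0.le ht1 ?_
    have := r.isLt
    omega
  have hGsum : HasSum G ((∏ r : Fin (e + 2 - 1), t ^ (e + 1 - (r : ℕ))) *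
      ∏ r : Fin (e + 2 - 1), (1 - t ^ (e + 1 - (r : ℕ)))⁻¹) := by
    have hgeo := (hasSum_pi_geometric (fun r : Fin (e + 2 - 1) => t ^ (e + 1 - (r : ℕ)))
      h0 h1).mul_left (∏ r : Fin (e + 2 - 1), t ^ (e + 1 - (r : ℕ)))
    have hfun : (fun b : Fin (e + 2 - 1) → ℕ =>
        (∏ r : Fin (e + 2 - 1), t ^ (e + 1 - (r : ℕ))) *
          ∏ r : Fin (e + 2 - 1), (t ^ (e + 1 - (r : ℕ))) ^ (b r)) = G := by
      funext b
      rw [hGdef]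
      simp only []
      rw [← Finset.prod_mul_distrib]
      exact Finset.prod_congr rfl fun r _ => by rw [pow_succ]; ring
    rw [← hfun]
    exact hgeo
  -- Step 3: finite support of F
  set M : ℕ := hf.toFinset.sup id with hMdef
  have hM : ∀ k, f k ≠ 0 → k ≤ M := fun k hk =>
    Finset.le_sup (f := id) ((Set.Finite.mem_toFinset hf).mpr hk)
  set A : Finset (Fin (s + 1) → ℕ) := Fintype.piFinset fun _ => Finset.range (M + 1) with hAdef
  have hFA : ∀ a ∉ A, F a = 0 := by
    intro a ha
    rw [hAdef, Fintype.mem_piFinset] at ha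
    push_neg at ha
    obtain ⟨l, hl⟩ := ha
    rw [Finset.mem_range] at hl
    push_neg at hl
    have hle : a l ≤ ∑ l', a l' :=
      Finset.single_le_sum (fun _ _ => Nat.zero_le _) (Finset.mem_univ l)
    have hfz : f (∑ l', a l') = 0 := by
      by_contra hcon
      have := hM _ hcon
      omega
    rw [hFdef]
    simp only []
    rw [hfz, zero_mul]
  have hFts : ∑' a, F a = ∑ a ∈ A, F a := tsum_eq_sum hFA
  have hFsummable : Summable F := summable_of_ne_finset_zero hFA
  -- Step 4: split the tsum
  have hsplit : (∑' p : (Fin (s + 1) → ℕ) × (Fin (e + 2 - 1) → ℕ), F p.1 * G p.2)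
      = (∑' a, F a) * (∑' b, G b) := by
    refine (tsum_mul_tsum_of_summable_norm ?_ ?_).symm
    · exact summable_of_ne_finset_zero (s := A) fun a ha => by rw [hFA a ha, norm_zero]
    · refine hGsum.summable.congr fun b => ?_
      rw [hGdef]
      simp only []
      rw [Real.norm_eq_abs, abs_of_nonneg]
      exact Finset.prod_nonneg fun r _ => pow_nonneg (h0 r) _
  -- Step 5: the constant times the geometric sum is 1
  have hC : (∏ j ∈ Finset.range (e + 2 - 1), (q ^ (-2 * ((j : ℤ) + 1)) - 1)) * (∑' b, G b)
      = 1 := by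
    rw [hGsum.tsum_eq]
    have hP1 : (∏ r : Fin (e + 2 - 1), t ^ (e + 1 - (r : ℕ)))
        = ∏ j ∈ Finset.range (e + 2 - 1), t ^ (j + 1) := by
      rw [Fin.prod_univ_eq_prod_range (fun i => t ^ (e + 1 - i)) (e + 2 - 1)]
      rw [← Finset.prod_range_reflect (fun j => t ^ (j + 1)) (e + 2 - 1)]
      refine Finset.prod_congr rfl fun j hj => ?_
      rw [Finset.mem_range] at hj
      congr 1
      omega
    have hP2 : (∏ r : Fin (e + 2 - 1), (1 - t ^ (e + 1 - (r : ℕ)))⁻¹)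
        = ∏ j ∈ Finset.range (e + 2 - 1), (1 - t ^ (j + 1))⁻¹ := by
      rw [Fin.prod_univ_eq_prod_range (fun i => (1 - t ^ (e + 1 - i))⁻¹) (e + 2 - 1)]
      rw [← Finset.prod_range_reflect (fun j => (1 - t ^ (j + 1))⁻¹) (e + 2 - 1)]
      refine Finset.prod_congr rfl fun j hj => ?_
      rw [Finset.mem_range] at hj
      congr 3
      omega
    have hcoef : ∀ j ∈ Finset.range (e + 2 - 1),
        q ^ (-2 * ((j : ℤ) + 1)) - 1 = (t ^ (j + 1))⁻¹ - 1 := by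
      intro j _
      rw [hq2 j, hQt, inv_pow]
    rw [hP1, hP2, Finset.prod_congr rfl hcoef, ← Finset.prod_mul_distrib,
      ← Finset.prod_mul_distrib]
    refine Finset.prod_eq_one fun j hj => ?_
    have hne : t ^ (j + 1) ≠ 0 := by positivity
    have hlt : t ^ (j + 1) < 1 := pow_lt_one₀ ht0.le ht1 (by omega)
    have hne2 : 1 - t ^ (j + 1) ≠ 0 := sub_ne_zero.mpr (ne_of_gt hlt)
    field_simp
  -- Step 6: fiberwise sum over the antidiagonal tuples
  set K : ℕ := (s + 1) * M + 1 with hKdef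
  have hmaps : ∀ a ∈ A, (∑ l, a l) ∈ Finset.range K := by
    intro a ha
    rw [hAdef, Fintype.mem_piFinset] at ha
    have : ∑ l, a l ≤ ∑ _l : Fin (s + 1), M :=
      Finset.sum_le_sum fun l _ => by
        have := ha l; rw [Finset.mem_range] at this; omega
    rw [Finset.sum_const, Finset.card_univ, Fintype.card_fin, smul_eq_mul] at this
    rw [Finset.mem_range, hKdef]
    omega
  have hFsum2 : ∑ a ∈ A, F a
      = ∑ k ∈ Finset.range K, f k * (Q ^ ((e + 2) * k) * Tsum' Q (s + 1) k) := by
    rw [← Finset.sum_fiberwise_of_maps_to hmaps F]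
    refine Finset.sum_congr rfl fun k hk => ?_
    by_cases hfk : f k = 0
    · rw [hfk, zero_mul]
      refine Finset.sum_eq_zero fun a ha => ?_
      rw [Finset.mem_filter] at ha
      rw [hFdef]
      simp only []
      rw [ha.2, hfk, zero_mul]
    · have hfib : A.filter (fun a => ∑ l, a l = k) = Finset.Nat.antidiagonalTuple (s + 1) k := by
        ext a
        rw [Finset.mem_filter, Finset.Nat.mem_antidiagonalTuple, hAdef, Fintype.mem_piFinset]
        constructor
        · rintro ⟨-, h⟩; exact h
        · intro h
          refine ⟨fun l => Finset.mem_range.mpr ?_, h⟩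
          have h1 : a l ≤ ∑ l', a l' :=
            Finset.single_le_sum (fun _ _ => Nat.zero_le _) (Finset.mem_univ l)
          have h2 : k ≤ M := hM k hfk
          omega
      rw [hfib, Tsum', Finset.mul_sum, Finset.mul_sum]
      refine Finset.sum_congr rfl fun a ha => ?_
      rw [Finset.Nat.mem_antidiagonalTuple] at ha
      have hw : ∑ l : Fin (s + 1), (s + e + 2 - (l : ℕ)) * a l
          = (e + 2) * k + ∑ l : Fin (s + 1), (s + 1 - 1 - (l : ℕ)) * a l := by
        rw [← ha, Finset.mul_sum, ← Finset.sum_add_distrib]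
        refine Finset.sum_congr rfl fun l _ => ?_
        rw [← add_mul]
        congr 1
        have := l.isLt
        omega
      rw [hFdef]
      simp only []
      rw [ha, hw, pow_add]
  -- Step 7: the per-k identity
  have hPd : (∏ j ∈ Finset.range s, (Q ^ (j + 1) - 1)) ≠ 0 :=
    Finset.prod_ne_zero_iff.mpr fun j _ =>
      sub_ne_zero.mpr (ne_of_gt (one_lt_pow₀ hQgt (by omega)))
  have hRk : ∀ k : ℕ, f k * (Q ^ ((e + 2) * k) * Tsum' Q (s + 1) k)
      = (Q - 1) * (f k * rhoWeight q (s + 1) (e + 2) (q ^ (-2 * (k : ℤ))) * q ^ (-2 * (k : ℤ))) := by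
    intro k
    have hxk : q ^ ((-2 : ℤ) * (k : ℤ)) = Q ^ k := hzp k
    rw [rhoWeight, hxk]
    rw [show ((s + 1 : ℕ) - 1) = s from rfl, show ((e + 2 : ℕ) - 1) = e + 1 from rfl]
    rw [← hQdef]
    have hcoef : ∀ j ∈ Finset.range s,
        (1 : ℝ) / (q ^ (-2 * ((j : ℤ) + 1)) - 1) = (Q ^ (j + 1) - 1)⁻¹ := by
      intro j _
      rw [hq2 j, one_div]
    have hcoef2 : ∀ j ∈ Finset.range s,
        q ^ (-2 * ((j : ℤ) + 1)) * Q ^ k - 1 = Q ^ (j + 1 + k) - 1 := by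
      intro j _
      rw [hq2 j, ← pow_add]
    rw [Finset.prod_congr rfl hcoef, Finset.prod_congr rfl hcoef2,
      Finset.prod_inv_distrib]
    have hTT : Tsum' Q (s + 1) k
        = (∏ j ∈ Finset.range s, (Q ^ (j + 1 + k) - 1)) *
          (∏ j ∈ Finset.range s, (Q ^ (j + 1) - 1))⁻¹ :=
      (eq_mul_inv_iff_mul_eq₀ hPd).mpr (Tsum'_eq Q s k)
    rw [hTT, ← pow_mul]
    field_simp
    ring
  -- Step 8: the right-hand side as a finite sum
  have hRzero : ∀ k ∉ Finset.range K,
      f k * rhoWeight q (s + 1) (e + 2) (q ^ (-2 * (k : ℤ))) * q ^ (-2 * (k : ℤ)) = 0 := by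
    intro k hk
    rw [Finset.mem_range, hKdef] at hk
    have hfk : f k = 0 := by
      by_contra hcon
      have h1 := hM k hcon
      have h2 : M ≤ (s + 1) * M := by nlinarith
      omega
    rw [hfk, zero_mul, zero_mul]
  rw [tsum_eq_sum hRzero]
  -- Step 9: assemble
  calc (∏ j ∈ Finset.range (e + 2 - 1), (q ^ (-2 * ((j : ℤ) + 1)) - 1)) *
      ∑' p : (Fin (s + 1) → ℕ) × (Fin (e + 2 - 1) → ℕ),
        f (∑ l, p.1 l) *
          q ^ (-(2 : ℤ) * ∑ l : Fin (s + 1), (((s + 1 + (e + 2) : ℕ) : ℤ) - 1 - (l : ℕ)) * p.1 l) *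
          q ^ ((2 : ℤ) * ∑ r : Fin (e + 2 - 1), (((e + 2 : ℕ) : ℤ) - 1 - (r : ℕ)) * (p.2 r + 1))
      = (∏ j ∈ Finset.range (e + 2 - 1), (q ^ (-2 * ((j : ℤ) + 1)) - 1)) *
        ((∑' a, F a) * (∑' b, G b)) := by
        rw [← hsplit]
        congr 1
        exact tsum_congr hsummand
    _ = ((∏ j ∈ Finset.range (e + 2 - 1), (q ^ (-2 * ((j : ℤ) + 1)) - 1)) * (∑' b, G b)) *
        (∑' a, F a) := by ring
    _ = ∑' a, F a := by rw [hC, one_mul]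
    _ = ∑ a ∈ A, F a := hFts
    _ = ∑ k ∈ Finset.range K, f k * (Q ^ ((e + 2) * k) * Tsum' Q (s + 1) k) := hFsum2
    _ = ∑ k ∈ Finset.range K, (Q - 1) *
        (f k * rhoWeight q (s + 1) (e + 2) (q ^ (-2 * (k : ℤ))) * q ^ (-2 * (k : ℤ))) :=
        Finset.sum_congr rfl fun k _ => hRk k
    _ = (Q - 1) * ∑ k ∈ Finset.range K,
        f k * rhoWeight q (s + 1) (e + 2) (q ^ (-2 * (k : ℤ))) * q ^ (-2 * (k : ℤ)) := by
        rw [Finset.mul_sum]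
end

section
/- Fix 0 < q < 1, integers n ≥ 1, m ≥ 2, N = n + m, and a parameter l ∈ ℂ. Define the operator □⁽⁰⁾ acting on functions f on the lattice q^{-2ℤ₊} ⊂ [1,∞) by (□⁽⁰⁾f)(x) = (q²/((1−q²)²x))·((x−1)q^{2m−2}f(q²x) + (q^{-2n}x − 1)f(q^{-2}x) + (1 + q^{2m−2} − q^{2m−2}x − q^{-2n}x)f(x)). Then the q-hypergeometric function Φ_l(x) = ₃Φ₂(x, q^{-2l}, q^{2(l+N−1)}; q^{2n}, 0; q², q²) satisfies □⁽⁰⁾Φ_l = λ(l)·Φ_l pointwise on q^{-2ℤ₊}, where λ(l) = −q^{2−2n}(1 − q^{-2l})(1 − q^{2l+2(N−1)})/(1 − q²)². -/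
/-- q-Pochhammer symbol `(a;x)_k = ∏_{i=0}^{k-1}(1 - a xⁱ)` in ℂ. -/
noncomputable def qpC (a x : ℂ) (k : ℕ) : ℂ := ∏ i ∈ Finset.range k, (1 - a * x ^ i)

/-- `Φ_l(q^{-2k}) = ₃Φ₂(q^{-2k}, q^{-2l}, q^{2(l+N−1)}; q^{2n}, 0; q², q²)`,
a terminating basic hypergeometric sum. -/
noncomputable def PhiFun (q : ℝ) (n N : ℕ) (l : ℂ) (k : ℕ) : ℂ :=
  ∑ i ∈ Finset.range (k + 1),
    qpC ((q : ℂ) ^ ((-2 : ℤ) * k)) ((q : ℂ) ^ 2) i *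
      qpC ((q : ℂ) ^ (-2 * l)) ((q : ℂ) ^ 2) i *
      qpC ((q : ℂ) ^ (2 * (l + (N : ℂ) - 1))) ((q : ℂ) ^ 2) i /
      (qpC ((q : ℂ) ^ 2) ((q : ℂ) ^ 2) i * qpC ((q : ℂ) ^ (2 * n)) ((q : ℂ) ^ 2) i) *
      ((q : ℂ) ^ 2) ^ i

set_option maxHeartbeats 1600000

lemma qpC_zero (a x : ℂ) : qpC a x 0 = 1 := by simp [qpC]

lemma qpC_succ (a x : ℂ) (k : ℕ) : qpC a x (k+1) = qpC a x k * (1 - a * x ^ k) :=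
  Finset.prod_range_succ _ _

lemma qpC_succ' (a x : ℂ) (k : ℕ) : qpC a x (k+1) = qpC (a*x) x k * (1 - a) := by
  unfold qpC
  rw [Finset.prod_range_succ']
  congr 1
  · exact Finset.prod_congr rfl fun i _ => by rw [pow_succ']; ring
  · simp

lemma qpC_one (a x : ℂ) : qpC a x 1 = 1 - a := by simp [qpC]

lemma qpC_shift (x t : ℂ) (i : ℕ) : (x - 1) * qpC (x*t) t i = -qpC x t (i+1) := by
  rw [qpC_succ' x t i]; ring

lemma qpC_div (x t : ℂ) (ht : t ≠ 0) (i : ℕ) :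
    qpC (x*t⁻¹) t (i+1) = (1 - x*t⁻¹) * qpC x t i := by
  rw [qpC_succ', show x*t⁻¹*t = x by field_simp]
  ring

lemma qpC_top (t : ℂ) (ht : t ≠ 0) {k i : ℕ} (h : k < i) : qpC ((t^k)⁻¹) t i = 0 := by
  unfold qpC
  apply Finset.prod_eq_zero (Finset.mem_range.2 h)
  rw [inv_mul_cancel₀ (pow_ne_zero _ ht), sub_self]

lemma qpC_ne_zero (y t : ℂ) (j : ℕ) (h : ∀ i, i < j → (1:ℂ) - y * t ^ i ≠ 0) :
    qpC y t j ≠ 0 := by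
  unfold qpC
  rw [Finset.prod_ne_zero_iff]
  exact fun i hi => h i (Finset.mem_range.1 hi)

noncomputable def Dq (t a b : ℂ) (n : ℕ) (i : ℕ) : ℂ :=
  qpC a t i * qpC b t i / (qpC t t i * qpC (t^n) t i)

lemma Dq_zero (t a b : ℂ) (n : ℕ) : Dq t a b n 0 = 1 := by simp [Dq, qpC_zero]

lemma Dq_one (t a b : ℂ) (n : ℕ) : Dq t a b n 1 = (1-a)*(1-b)/((1-t)*(1-t^n)) := by
  simp [Dq, qpC_one]

lemma Dq_succ (t a b : ℂ) (n i : ℕ) (h1 : qpC t t i ≠ 0) (h2 : qpC (t^n) t i ≠ 0)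
    (h3 : (1:ℂ) - t * t ^ i ≠ 0) (h4 : (1:ℂ) - t^n * t ^ i ≠ 0) :
    Dq t a b n (i+1)
      = Dq t a b n i * ((1 - a * t^i) * (1 - b * t^i)) / ((1 - t * t^i) * (1 - t^n * t^i)) := by
  unfold Dq
  rw [qpC_succ, qpC_succ, qpC_succ, qpC_succ]
  field_simp

noncomputable def Wfun (t a b x : ℂ) (n m : ℕ) (i : ℕ) : ℂ :=
  if i = 0 then 0 else
    -(Dq t a b n i * (t*(t^n)⁻¹ - t*(t^n)⁻¹*(t^i)⁻¹ - t^i + 1)) * qpC x t (i-1)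
    + Dq t a b n (i-1) *
        (-(t^(m-1)*t^(i-1)) - (t^n)⁻¹*(t^(i-1))⁻¹ + t^(m-1) + (t^n)⁻¹ - (t^n)⁻¹*(1-a)*(1-b))
        * qpC x t i

lemma Wfun_zero (t a b x : ℂ) (n m : ℕ) : Wfun t a b x n m 0 = 0 := by simp [Wfun]

lemma Wfun_succ (t a b x : ℂ) (n m : ℕ) (j : ℕ) :
    Wfun t a b x n m (j+1)
      = -(Dq t a b n (j+1) * (t*(t^n)⁻¹ - t*(t^n)⁻¹*(t^(j+1))⁻¹ - t^(j+1) + 1)) * qpC x t j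
        + Dq t a b n j *
            (-(t^(m-1)*t^j) - (t^n)⁻¹*(t^j)⁻¹ + t^(m-1) + (t^n)⁻¹ - (t^n)⁻¹*(1-a)*(1-b))
            * qpC x t (j+1) := by
  simp [Wfun]

lemma Dq_rec (t a b : ℂ) (n i : ℕ) (h1 : qpC t t i ≠ 0) (h2 : qpC (t^n) t i ≠ 0)
    (h3 : (1:ℂ) - t * t ^ i ≠ 0) (h4 : (1:ℂ) - t^n * t ^ i ≠ 0) :
    Dq t a b n (i+1) * ((1 - t * t^i) * (1 - t^n * t^i))
      = Dq t a b n i * ((1 - a * t^i) * (1 - b * t^i)) := by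
  unfold Dq
  rw [qpC_succ, qpC_succ, qpC_succ, qpC_succ]
  rw [div_mul_eq_mul_div, div_mul_eq_mul_div, div_eq_div_iff
    (mul_ne_zero (mul_ne_zero h1 h3) (mul_ne_zero h2 h4)) (mul_ne_zero h1 h2)]
  ring

noncomputable def WU (t a b x : ℂ) (n m : ℕ) (i : ℕ) : ℂ :=
  if i = 0 then 0 else
    (t^n * t^i)⁻¹ *
      (-(Dq t a b n i * ((t^i - 1) * (t - t^n * t^i))) * qpC x t (i-1)
        + Dq t a b n (i-1) *
            (t * (t^(m-1)*t^n*t^(i-1) + t^(i-1) - 1 - t^(m-1)*t^n*(t^(i-1)*t^(i-1))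
              - t^(i-1)*(1-a)*(1-b))) * qpC x t i)

lemma WU_zero (t a b x : ℂ) (n m : ℕ) : WU t a b x n m 0 = 0 := by simp [WU]

lemma WU_succ (t a b x : ℂ) (n m : ℕ) (j : ℕ) :
    WU t a b x n m (j+1)
      = (t^n * t^(j+1))⁻¹ *
          (-(Dq t a b n (j+1) * ((t^(j+1) - 1) * (t - t^n * t^(j+1)))) * qpC x t j
            + Dq t a b n j *
                (t * (t^(m-1)*t^n*t^j + t^j - 1 - t^(m-1)*t^n*(t^j*t^j)
                  - t^j*(1-a)*(1-b))) * qpC x t (j+1)) := by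
  simp [WU]

lemma keyP (t u v w x a b p d0 d1 d2 : ℂ)
    (hD1 : d1 * ((1 - t*u) * (1 - v*u)) = d0 * ((1 - a*u) * (1 - b*u)))
    (hD2 : d2 * ((1 - t*(u*t)) * (1 - v*(u*t))) = d1 * ((1 - a*(u*t)) * (1 - b*(u*t))))
    (hab : a * b = v * w) :
    d1 * (u*t) * (u*t) *
        (-(v*t*w) * (p*(1-x*u)*(1-x*(u*t))) + (x - v)*(t - x)*p
          + (v + v*w - v*w*x - x + (1-a)*(1-b)*x) * (t*(p*(1-x*u))))
      = (-(d2 * ((u*t*t - 1) * (t - v*(u*t*t)))) * (p*(1-x*u))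
          + d1 * (t * (w*v*(u*t) + (u*t) - 1 - w*v*((u*t)*(u*t)) - (u*t)*(1-a)*(1-b)))
              * (p*(1-x*u)*(1-x*(u*t))))
        - t * (-(d1 * ((u*t - 1) * (t - v*(u*t)))) * p
            + d0 * (t * (w*v*u + u - 1 - w*v*(u*u) - u*(1-a)*(1-b))) * (p*(1-x*u))) := by
  linear_combination (-(t*p*(1-u*x))) * hD2 + (t^2*p*(1-u*x)) * hD1
    + (t^2*u*p*(1-u*x)*(d1*(1-t*u) - d0*(1-u))) * hab

lemma key0 (t v w x a b d1 : ℂ)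
    (hD0 : d1 * ((1 - t) * (1 - v)) = (1 - a) * (1 - b)) :
    t * ((v*w)*(x-1) + (x - v) + (v + v*w - v*w*x - x + (1-a)*(1-b)*x))
      = -(d1 * ((t - 1) * (t - v*t))) * 1
        + 1 * (t * (w*v + 1 - 1 - w*v*(1*1) - 1*((1-a)*(1-b)))) * (1-x) := by
  linear_combination (-t) * hD0

lemma inv_split (v u t X Y : ℂ) (ht : t ≠ 0) (hu : u ≠ 0) (hv : v ≠ 0) :
    (v*(u*t)*t)⁻¹ * (X - t*Y) = (v*(u*t*t))⁻¹ * X - (v*(u*t))⁻¹ * Y := by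
  rw [mul_sub]
  congr 1
  · rw [mul_assoc]
  · rw [mul_inv, mul_assoc, ← mul_assoc t⁻¹ t Y, inv_mul_cancel₀ ht, one_mul]

lemma master (t a b x : ℂ) (n m k : ℕ) (hn : 1 ≤ n) (ht : t ≠ 0)
    (ht1 : ∀ i : ℕ, 1 ≤ i → (1:ℂ) - t ^ i ≠ 0)
    (hab : a * b = t ^ n * t ^ (m-1))
    (hx1 : qpC x t (k+1) = 0) (hx2 : qpC x t (k+2) = 0) :
    ∑ i ∈ Finset.range (k+2), Dq t a b n i * t^i *
      (t^(m-1) * ((x - 1) * qpC (x*t) t i)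
        + ((t^n)⁻¹ * x - 1) * qpC (x*t⁻¹) t i
        + (1 + t^(m-1) - t^(m-1)*x - (t^n)⁻¹*x + (t^n)⁻¹*(1-a)*(1-b)*x) * qpC x t i) = 0 := by
  have hd1 : ∀ s : ℕ, (1:ℂ) - t*t^s ≠ 0 := fun s => by
    have := ht1 (s+1) (by omega); rwa [pow_succ, mul_comm (t^s) t] at this
  have hd2 : ∀ s : ℕ, (1:ℂ) - t^n*t^s ≠ 0 := fun s => by
    have := ht1 (n+s) (by omega); rwa [pow_add] at this
  have hqt : ∀ i : ℕ, qpC t t i ≠ 0 := fun i =>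
    qpC_ne_zero _ _ _ (fun s _ => hd1 s)
  have hqtn : ∀ i : ℕ, qpC (t^n) t i ≠ 0 := fun i =>
    qpC_ne_zero _ _ _ (fun s _ => hd2 s)
  have h1t : (1:ℂ) - t ≠ 0 := by have := ht1 1 le_rfl; rwa [pow_one] at this
  have htn0 : (1:ℂ) - t^n ≠ 0 := ht1 n hn
  have key : ∀ i : ℕ, Dq t a b n i * t^i *
      (t^(m-1) * ((x - 1) * qpC (x*t) t i)
        + ((t^n)⁻¹ * x - 1) * qpC (x*t⁻¹) t i
        + (1 + t^(m-1) - t^(m-1)*x - (t^n)⁻¹*x + (t^n)⁻¹*(1-a)*(1-b)*x) * qpC x t i)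
      = WU t a b x n m (i+1) - WU t a b x n m i := by
    intro i
    match i with
    | 0 =>
      rw [WU_zero, WU_succ, sub_zero]
      simp only [qpC_zero, qpC_one, Dq_zero, pow_zero, pow_one, zero_add,
        sub_zero, inv_one, mul_one, one_mul]
      obtain ⟨v, hv⟩ : ∃ v : ℂ, v = t^n := ⟨_, rfl⟩
      obtain ⟨w, hw⟩ : ∃ w : ℂ, w = t^(m-1) := ⟨_, rfl⟩
      have hv0 : v ≠ 0 := by rw [hv]; exact pow_ne_zero n ht
      have hD0 : Dq t a b n 1 * ((1 - t) * (1 - v)) = (1 - a) * (1 - b) := by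
        have := Dq_rec t a b n 0 (hqt 0) (hqtn 0) (hd1 0) (hd2 0)
        simp only [pow_zero, mul_one, Dq_zero, one_mul, zero_add] at this
        rw [hv]; exact this
      have hK := key0 t v w x a b (Dq t a b n 1) hD0
      rw [← hv, ← hw]
      refine Eq.trans (b := (v*t)⁻¹ *
        (t * ((v*w)*(x-1) + (x - v) + (v + v*w - v*w*x - x + (1-a)*(1-b)*x)))) ?_ ?_
      · field_simp [ht, hv0]
        try ring
      · rw [hK]
        field_simp [ht, hv0]
        try ring
    | (j+1) =>
      obtain ⟨v, hv⟩ : ∃ v : ℂ, v = t^n := ⟨_, rfl⟩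
      obtain ⟨w, hw⟩ : ∃ w : ℂ, w = t^(m-1) := ⟨_, rfl⟩
      obtain ⟨u, hu⟩ : ∃ u : ℂ, u = t^j := ⟨_, rfl⟩
      have hu0 : u ≠ 0 := by rw [hu]; exact pow_ne_zero j ht
      have hv0 : v ≠ 0 := by rw [hv]; exact pow_ne_zero n ht
      have hD1 : Dq t a b n (j+1) * ((1 - t*u) * (1 - v*u))
          = Dq t a b n j * ((1 - a*u) * (1 - b*u)) := by
        rw [hu, hv]; exact Dq_rec t a b n j (hqt _) (hqtn _) (hd1 _) (hd2 _)
      have hD2 : Dq t a b n (j+2) * ((1 - t*(u*t)) * (1 - v*(u*t)))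
          = Dq t a b n (j+1) * ((1 - a*(u*t)) * (1 - b*(u*t))) := by
        have := Dq_rec t a b n (j+1) (hqt _) (hqtn _) (hd1 _) (hd2 _)
        rw [hu, hv]
        simpa only [pow_succ] using this
      have hK := keyP t u v w x a b (qpC x t j) (Dq t a b n j) (Dq t a b n (j+1))
        (Dq t a b n (j+2)) hD1 hD2 (by rw [hv, hw]; exact hab)
      rw [WU_succ, WU_succ, qpC_shift x t (j+1), qpC_div x t ht j,
        qpC_succ x t (j+1), qpC_succ x t j]
      simp only [pow_succ]
      rw [← hv, ← hw, ← hu]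
      rw [show j+1+1 = j+2 from rfl]
      refine Eq.trans (b := (v*(u*t)*t)⁻¹ *
        (Dq t a b n (j+1) * (u*t) * (u*t) *
          (-(v*t*w) * (qpC x t j*(1-x*u)*(1-x*(u*t))) + (x - v)*(t - x)*qpC x t j
            + (v + v*w - v*w*x - x + (1-a)*(1-b)*x) * (t*(qpC x t j*(1-x*u)))))) ?_ ?_
      · field_simp [ht, hu0, hv0]
        try ring
      · rw [hK, inv_split v u t _ _ ht hu0 hv0]
        try ring
  have hsum : ∑ i ∈ Finset.range (k+2), Dq t a b n i * t^i *
      (t^(m-1) * ((x - 1) * qpC (x*t) t i)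
        + ((t^n)⁻¹ * x - 1) * qpC (x*t⁻¹) t i
        + (1 + t^(m-1) - t^(m-1)*x - (t^n)⁻¹*x + (t^n)⁻¹*(1-a)*(1-b)*x) * qpC x t i)
      = ∑ i ∈ Finset.range (k+2), (WU t a b x n m (i+1) - WU t a b x n m i) :=
    Finset.sum_congr rfl fun i _ => key i
  rw [hsum, Finset.sum_range_sub, WU_zero, sub_zero,
    show k+2 = (k+1)+1 from rfl, WU_succ, hx1, hx2]
  ring

lemma Phi_eq (q : ℝ) (n N : ℕ) (l : ℂ) (k : ℕ) :
    PhiFun q n N l k = ∑ i ∈ Finset.range (k+1),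
      Dq ((q:ℂ)^2) ((q:ℂ)^(-2*l)) ((q:ℂ)^(2*(l+(N:ℂ)-1))) n i * ((q:ℂ)^2)^i *
        qpC ((((q:ℂ)^2)^k)⁻¹) ((q:ℂ)^2) i := by
  unfold PhiFun Dq
  refine Finset.sum_congr rfl fun i _ => ?_
  rw [show (q:ℂ)^((-2:ℤ)*k) = (((q:ℂ)^2)^k)⁻¹ by
      rw [show ((-2:ℤ)*(k:ℤ)) = -(((2*k:ℕ)):ℤ) by push_cast; ring,
        zpow_neg, zpow_natCast, pow_mul],
    show (q:ℂ)^(2*n) = ((q:ℂ)^2)^n from pow_mul _ 2 n]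
  ring

lemma T1ext (t a b : ℂ) (n k : ℕ) (w : ℂ) (ht : t ≠ 0) :
    ((t^k)⁻¹ - 1) * w * (∑ i ∈ Finset.range ((k-1)+1),
        Dq t a b n i * t^i * qpC ((t^(k-1))⁻¹) t i)
      = ((t^k)⁻¹ - 1) * w * (∑ i ∈ Finset.range (k+2),
          Dq t a b n i * t^i * qpC ((t^k)⁻¹ * t) t i) := by
  cases k with
  | zero => simp
  | succ j =>
    have harg : ((t^(j+1))⁻¹ * t : ℂ) = (t^j)⁻¹ := by
      rw [pow_succ, mul_inv, mul_assoc, inv_mul_cancel₀ ht, mul_one]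
    congr 1
    simp only [harg, Nat.add_sub_cancel]
    refine Finset.sum_subset (Finset.range_subset_range.mpr (by omega)) fun i hi hni => ?_
    simp only [Finset.mem_range] at hi hni
    rw [qpC_top t ht (show j < i by omega), mul_zero]

lemma ext3 (t a b : ℂ) (n k : ℕ) (ht : t ≠ 0) :
    (∑ i ∈ Finset.range (k+1), Dq t a b n i * t^i * qpC ((t^k)⁻¹) t i)
      = ∑ i ∈ Finset.range (k+2), Dq t a b n i * t^i * qpC ((t^k)⁻¹) t i := by
  refine Finset.sum_subset (Finset.range_subset_range.mpr (by omega)) fun i hi hni => ?_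
  simp only [Finset.mem_range] at hi hni
  rw [qpC_top t ht (show k < i by omega), mul_zero]

/-- `Φ_l` is a generalized eigenfunction of the radial part `□⁽⁰⁾` of the Laplace–Beltrami
operator, with eigenvalue `λ(l) = −q^{2−2n}(1−q^{-2l})(1−q^{2l+2(N−1)})/(1−q²)²`.
Here the lattice point is `x = q^{-2k}`; at `k = 0` the term `f(q²x)` carries the vanishing
coefficient `(x−1)` (we encode `Φ_l(q^{-2(k-1)})` via truncated subtraction). -/
theorem stmt6 (q : ℝ) (hq : 0 < q) (hq1 : q < 1) (n m N : ℕ)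
    (hn : 1 ≤ n) (hm : 2 ≤ m) (hN : N = n + m) (l : ℂ) (k : ℕ) :
    (q : ℂ) ^ 2 / ((1 - (q : ℂ) ^ 2) ^ 2 * (q : ℂ) ^ ((-2 : ℤ) * k)) *
        (((q : ℂ) ^ ((-2 : ℤ) * k) - 1) * (q : ℂ) ^ (2 * m - 2) * PhiFun q n N l (k - 1) +
          ((q : ℂ) ^ ((-2 : ℤ) * n) * (q : ℂ) ^ ((-2 : ℤ) * k) - 1) * PhiFun q n N l (k + 1) +
          (1 + (q : ℂ) ^ (2 * m - 2) - (q : ℂ) ^ (2 * m - 2) * (q : ℂ) ^ ((-2 : ℤ) * k) -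
              (q : ℂ) ^ ((-2 : ℤ) * n) * (q : ℂ) ^ ((-2 : ℤ) * k)) * PhiFun q n N l k)
      = -(q : ℂ) ^ ((2 : ℤ) - 2 * n) *
          (1 - (q : ℂ) ^ (-2 * l)) * (1 - (q : ℂ) ^ (2 * l + 2 * ((N : ℂ) - 1))) /
          (1 - (q : ℂ) ^ 2) ^ 2 * PhiFun q n N l k := by
  have hq0 : (q:ℂ) ≠ 0 := by exact_mod_cast ne_of_gt hq
  have ht : ((q:ℂ)^2) ≠ 0 := pow_ne_zero _ hq0
  have ht1 : ∀ i : ℕ, 1 ≤ i → (1:ℂ) - ((q:ℂ)^2)^i ≠ 0 := by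
    intro i hi h
    rw [sub_eq_zero] at h
    have hcast : (((q^2)^i : ℝ) : ℂ) = ((q:ℂ)^2)^i := by push_cast; ring
    have h2 : ((q^2)^i : ℝ) = 1 := by exact_mod_cast hcast.trans h.symm
    have hlt : (q^2)^i < 1 := by
      apply pow_lt_one₀ (by positivity) (by nlinarith) (by omega)
    linarith
  have h1t : (1:ℂ) - (q:ℂ)^2 ≠ 0 := by
    have := ht1 1 le_rfl; rwa [pow_one] at this
  have hab : ((q:ℂ)^(-2*l)) * ((q:ℂ)^(2*(l+(N:ℂ)-1)))
      = ((q:ℂ)^2)^n * ((q:ℂ)^2)^(m-1) := by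
    rw [← Complex.cpow_add _ _ hq0]
    have he : -2*l + 2*(l+(N:ℂ)-1) = ((2*(N-1) : ℕ) : ℂ) := by
      have h1 : (((N-1) : ℕ) : ℂ) = (N:ℂ) - 1 := by
        rw [Nat.cast_sub (by omega : 1 ≤ N)]; norm_num
      rw [Nat.cast_mul, h1]; push_cast; ring
    rw [he, Complex.cpow_natCast, pow_mul, ← pow_add,
      show n + (m-1) = N - 1 by omega]
  have hx1 : qpC ((((q:ℂ)^2)^k)⁻¹) ((q:ℂ)^2) (k+1) = 0 := qpC_top _ ht (Nat.lt_succ_self k)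
  have hx2 : qpC ((((q:ℂ)^2)^k)⁻¹) ((q:ℂ)^2) (k+2) = 0 := qpC_top _ ht (by omega)
  have hmaster := master ((q:ℂ)^2) ((q:ℂ)^(-2*l)) ((q:ℂ)^(2*(l+(N:ℂ)-1)))
      ((((q:ℂ)^2)^k)⁻¹) n m k hn ht ht1 hab hx1 hx2
  have hpz : ∀ j : ℕ, (q:ℂ)^((-2:ℤ)*j) = (((q:ℂ)^2)^j)⁻¹ := fun j => by
    rw [show ((-2:ℤ)*(j:ℤ)) = -(((2*j:ℕ)):ℤ) by push_cast; ring,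
      zpow_neg, zpow_natCast, pow_mul]
  rw [show (q:ℂ)^(2*l + 2*((N:ℂ)-1)) = (q:ℂ)^(2*(l+(N:ℂ)-1)) by
      rw [show 2*l + 2*((N:ℂ)-1) = 2*(l+(N:ℂ)-1) from by ring]]
  rw [hpz k, hpz n]
  rw [show (q:ℂ)^(2*m-2) = ((q:ℂ)^2)^(m-1) by rw [show 2*m-2 = 2*(m-1) by omega, pow_mul]]
  rw [show (q:ℂ)^((2:ℤ) - 2*(n:ℤ)) = (q:ℂ)^2 * (((q:ℂ)^2)^n)⁻¹ by
      rw [show ((2:ℤ) - 2*(n:ℤ)) = ((2:ℕ):ℤ) + -(((2*n:ℕ)):ℤ) by push_cast; ring,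
        zpow_add₀ hq0, zpow_neg, zpow_natCast, zpow_natCast, pow_mul]]
  rw [Phi_eq q n N l (k-1), Phi_eq q n N l (k+1), Phi_eq q n N l k]
  rw [T1ext ((q:ℂ)^2) _ _ n k (((q:ℂ)^2)^(m-1)) ht]
  rw [ext3 ((q:ℂ)^2) _ _ n k ht]
  simp only [show ((((q:ℂ)^2)^(k+1))⁻¹ : ℂ) = (((q:ℂ)^2)^k)⁻¹ * ((q:ℂ)^2)⁻¹ by
    rw [pow_succ, mul_inv]]
  have hlam : -((q:ℂ)^2 * (((q:ℂ)^2)^n)⁻¹) * (1 - (q:ℂ)^(-2*l))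
        * (1 - (q:ℂ)^(2*(l+(N:ℂ)-1))) / (1-(q:ℂ)^2)^2
      = (q:ℂ)^2 / ((1-(q:ℂ)^2)^2 * (((q:ℂ)^2)^k)⁻¹) *
          (-((((q:ℂ)^2)^n)⁻¹ * (1 - (q:ℂ)^(-2*l)) * (1 - (q:ℂ)^(2*(l+(N:ℂ)-1)))
            * (((q:ℂ)^2)^k)⁻¹)) := by
    rw [div_mul_eq_mul_div, div_eq_div_iff (pow_ne_zero 2 h1t)
      (mul_ne_zero (pow_ne_zero 2 h1t) (inv_ne_zero (pow_ne_zero k ht)))]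
    ring
  rw [hlam]
  rw [← sub_eq_zero]
  simp only [Finset.mul_sum]
  rw [← Finset.sum_add_distrib, ← Finset.sum_add_distrib, Finset.mul_sum,
    ← Finset.sum_sub_distrib]
  have hcong : ∀ i ∈ Finset.range (k+2),
      ((q:ℂ)^2 / ((1-(q:ℂ)^2)^2 * (((q:ℂ)^2)^k)⁻¹) *
        (((((q:ℂ)^2)^k)⁻¹ - 1) * ((q:ℂ)^2)^(m-1) *
          (Dq ((q:ℂ)^2) ((q:ℂ)^(-2*l)) ((q:ℂ)^(2*(l+(N:ℂ)-1))) n i * ((q:ℂ)^2)^i *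
            qpC ((((q:ℂ)^2)^k)⁻¹ * (q:ℂ)^2) ((q:ℂ)^2) i)
        + ((((q:ℂ)^2)^n)⁻¹ * (((q:ℂ)^2)^k)⁻¹ - 1) *
          (Dq ((q:ℂ)^2) ((q:ℂ)^(-2*l)) ((q:ℂ)^(2*(l+(N:ℂ)-1))) n i * ((q:ℂ)^2)^i *
            qpC ((((q:ℂ)^2)^k)⁻¹ * ((q:ℂ)^2)⁻¹) ((q:ℂ)^2) i)
        + (1 + ((q:ℂ)^2)^(m-1) - ((q:ℂ)^2)^(m-1) * (((q:ℂ)^2)^k)⁻¹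
            - (((q:ℂ)^2)^n)⁻¹ * (((q:ℂ)^2)^k)⁻¹) *
          (Dq ((q:ℂ)^2) ((q:ℂ)^(-2*l)) ((q:ℂ)^(2*(l+(N:ℂ)-1))) n i * ((q:ℂ)^2)^i *
            qpC ((((q:ℂ)^2)^k)⁻¹) ((q:ℂ)^2) i))
      - (q:ℂ)^2 / ((1-(q:ℂ)^2)^2 * (((q:ℂ)^2)^k)⁻¹) *
          (-((((q:ℂ)^2)^n)⁻¹ * (1 - (q:ℂ)^(-2*l)) * (1 - (q:ℂ)^(2*(l+(N:ℂ)-1)))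
            * (((q:ℂ)^2)^k)⁻¹)) *
          (Dq ((q:ℂ)^2) ((q:ℂ)^(-2*l)) ((q:ℂ)^(2*(l+(N:ℂ)-1))) n i * ((q:ℂ)^2)^i *
            qpC ((((q:ℂ)^2)^k)⁻¹) ((q:ℂ)^2) i))
      = (q:ℂ)^2 / ((1-(q:ℂ)^2)^2 * (((q:ℂ)^2)^k)⁻¹) *
          (Dq ((q:ℂ)^2) ((q:ℂ)^(-2*l)) ((q:ℂ)^(2*(l+(N:ℂ)-1))) n i * ((q:ℂ)^2)^i *
            (((q:ℂ)^2)^(m-1) * (((((q:ℂ)^2)^k)⁻¹ - 1) *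
                qpC ((((q:ℂ)^2)^k)⁻¹ * (q:ℂ)^2) ((q:ℂ)^2) i)
              + ((((q:ℂ)^2)^n)⁻¹ * (((q:ℂ)^2)^k)⁻¹ - 1) *
                qpC ((((q:ℂ)^2)^k)⁻¹ * ((q:ℂ)^2)⁻¹) ((q:ℂ)^2) i
              + (1 + ((q:ℂ)^2)^(m-1) - ((q:ℂ)^2)^(m-1) * (((q:ℂ)^2)^k)⁻¹
                  - (((q:ℂ)^2)^n)⁻¹ * (((q:ℂ)^2)^k)⁻¹
                  + (((q:ℂ)^2)^n)⁻¹ * (1 - (q:ℂ)^(-2*l)) * (1 - (q:ℂ)^(2*(l+(N:ℂ)-1)))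
                    * (((q:ℂ)^2)^k)⁻¹) *
                qpC ((((q:ℂ)^2)^k)⁻¹) ((q:ℂ)^2) i)) := fun i _ => by ring
  rw [Finset.sum_congr rfl hcong, ← Finset.mul_sum, hmaster, mul_zero]
end
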